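/- Let s=(a,b,c,d) and s'=(c,d,e,f) be squares of the subcubic graph G that share exactly one edge, namely (c,d), and assume the weight function w is vertex-induced on s'. If M1 is a 2-matching of G that contains all four native edges of s, then there exists a 2-matching M2 of G with w(M2) ≥ w(M1) such that M2 does not contain all four native edges of s, and every square of G all of whose native edges lie in M2 also has all of its native edges in M1. -/
import Mathlib


open Finset
open scoped Classical

namespace Paper

variable {V : Type*}

/-- `t` is the vertex set of a triangle (cycle of length 3) of `G`. -/
def IsTriangle (G : SimpleGraph V) (t : Finset V) : Prop :=
  t.card = 3 ∧ ∀ x ∈ t, ∀ y ∈ t, x ≠ y → G.Adj x y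

/-- The (three) edges of a triangle with vertex set `t`. -/
def triEdges [DecidableEq V] (t : Finset V) : Finset (Sym2 V) :=
  t.sym2.filter (fun e => ¬ e.IsDiag)

/-- Some connected component of `G` is isomorphic to the complete graph `K₄`:
there are four pairwise distinct, pairwise adjacent vertices that have no
neighbours outside of these four vertices. -/
def HasK4Component (G : SimpleGraph V) : Prop :=
  ∃ a b c d : V, a ≠ b ∧ a ≠ c ∧ a ≠ d ∧ b ≠ c ∧ b ≠ d ∧ c ≠ d ∧
    G.Adj a b ∧ G.Adj a c ∧ G.Adj a d ∧ G.Adj b c ∧ G.Adj b d ∧ G.Adj c d ∧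
    ∀ x y : V, (x = a ∨ x = b ∨ x = c ∨ x = d) → G.Adj x y →
      (y = a ∨ y = b ∨ y = c ∨ y = d)

/-- The degree of the vertex `v` in the edge set `M`, i.e. the number of edges
of `M` incident to `v`. -/
noncomputable def degIn (M : Finset (Sym2 V)) (v : V) : ℕ :=
  (M.filter (fun e => v ∈ e)).card

/-- `M` is a 2-matching of `G`: a set of edges of `G` such that every vertex is
incident to at most two of its edges. -/
def Is2Matching (G : SimpleGraph V) (M : Finset (Sym2 V)) : Prop :=
  (∀ e ∈ M, e ∈ G.edgeSet) ∧ ∀ v : V, degIn M v ≤ 2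

/-- No triangle of `G` has all three of its edges in `M`. -/
def TriangleFree [DecidableEq V] (G : SimpleGraph V) (M : Finset (Sym2 V)) : Prop :=
  ∀ t : Finset V, IsTriangle G t → ¬ triEdges t ⊆ M

/-- The triangle `t` is unproblematic: some other triangle `t'` shares an edge
with `t` and `w(t) ≤ w(t')`. -/
def TriUnprob [DecidableEq V] (G : SimpleGraph V) (w : Sym2 V → ℝ) (t : Finset V) : Prop :=
  ∃ t' : Finset V, IsTriangle G t' ∧ t' ≠ t ∧ (triEdges t ∩ triEdges t').Nonempty ∧
    ∑ e ∈ triEdges t, w e ≤ ∑ e ∈ triEdges t', w e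

/-- The triangle `t` is problematic. -/
def ProblemTri [DecidableEq V] (G : SimpleGraph V) (w : Sym2 V → ℝ) (t : Finset V) : Prop :=
  IsTriangle G t ∧ ¬ TriUnprob G w t

/-- `(a, b, c, d)` is a square (cycle of length 4) of `G`. -/
def IsSquare4 (G : SimpleGraph V) (a b c d : V) : Prop :=
  a ≠ b ∧ a ≠ c ∧ a ≠ d ∧ b ≠ c ∧ b ≠ d ∧ c ≠ d ∧
  G.Adj a b ∧ G.Adj b c ∧ G.Adj c d ∧ G.Adj d a

/-- The four native edges of the square `(a, b, c, d)`. -/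
def sqEdges [DecidableEq V] (a b c d : V) : Finset (Sym2 V) :=
  {s(a, b), s(b, c), s(c, d), s(d, a)}

/-- No square of `G` has all four of its native edges in `M`. -/
def SquareFree [DecidableEq V] (G : SimpleGraph V) (M : Finset (Sym2 V)) : Prop :=
  ∀ a b c d : V, IsSquare4 G a b c d → ¬ sqEdges a b c d ⊆ M

/-- The square `(a, b, c, d)` is unproblematic: there is another square `s'`
such that either they share exactly one edge, or they share two edges and
`w(s) ≤ w(s')`. -/
def SqUnprob [DecidableEq V] (G : SimpleGraph V) (w : Sym2 V → ℝ) (a b c d : V) : Prop :=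
  ∃ a' b' c' d' : V, IsSquare4 G a' b' c' d' ∧ sqEdges a' b' c' d' ≠ sqEdges a b c d ∧
    ((sqEdges a b c d ∩ sqEdges a' b' c' d').card = 1 ∨
     ((sqEdges a b c d ∩ sqEdges a' b' c' d').card = 2 ∧
       ∑ e ∈ sqEdges a b c d, w e ≤ ∑ e ∈ sqEdges a' b' c' d', w e))

/-- The square `(a, b, c, d)` is problematic. -/
def ProblemSq [DecidableEq V] (G : SimpleGraph V) (w : Sym2 V → ℝ) (a b c d : V) : Prop :=
  IsSquare4 G a b c d ∧ ¬ SqUnprob G w a b c d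

-- helpers to insert before the theorem

private lemma sym2_ne_of {α : Type*} {p q u v : α} (h1 : p = u ∧ q = v → False)
    (h2 : p = v ∧ q = u → False) : s(p, q) ≠ s(u, v) := by
  intro h
  rw [Sym2.eq_iff] at h
  rcases h with h | h
  exacts [h1 h, h2 h]

private lemma sym2_mem_exists {α : Type*} (v : α) :
    ∀ e : Sym2 α, v ∈ e → ∃ x, e = s(v, x) := by
  intro e
  induction e using Sym2.ind with
  | _ x y =>
    intro h
    rcases Sym2.mem_iff.mp h with rfl | rfl
    · exact ⟨y, rfl⟩
    · exact ⟨x, Sym2.eq_swap⟩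

private lemma three_le_card {α : Type*} [DecidableEq α] {s : Finset α} {e1 e2 e3 : α}
    (h1 : e1 ∈ s) (h2 : e2 ∈ s) (h3 : e3 ∈ s)
    (d12 : e1 ≠ e2) (d13 : e1 ≠ e3) (d23 : e2 ≠ e3) : 3 ≤ s.card := by
  have hsub : ({e1, e2, e3} : Finset α) ⊆ s := by
    intro x hx
    simp only [Finset.mem_insert, Finset.mem_singleton] at hx
    rcases hx with rfl | rfl | rfl <;> assumption
  have hcard : ({e1, e2, e3} : Finset α).card = 3 := by
    rw [Finset.card_insert_of_notMem (by simp [d12, d13]),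
        Finset.card_insert_of_notMem (by simp [d23]), Finset.card_singleton]
  exact hcard ▸ Finset.card_le_card hsub

private lemma five_le_card {α : Type*} [DecidableEq α] {s : Finset α} {e1 e2 e3 e4 e5 : α}
    (h1 : e1 ∈ s) (h2 : e2 ∈ s) (h3 : e3 ∈ s) (h4 : e4 ∈ s) (h5 : e5 ∈ s)
    (d12 : e1 ≠ e2) (d13 : e1 ≠ e3) (d14 : e1 ≠ e4) (d15 : e1 ≠ e5)
    (d23 : e2 ≠ e3) (d24 : e2 ≠ e4) (d25 : e2 ≠ e5)
    (d34 : e3 ≠ e4) (d35 : e3 ≠ e5) (d45 : e4 ≠ e5) : 5 ≤ s.card := by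
  have hsub : ({e1, e2, e3, e4, e5} : Finset α) ⊆ s := by
    intro x hx
    simp only [Finset.mem_insert, Finset.mem_singleton] at hx
    rcases hx with rfl | rfl | rfl | rfl | rfl <;> assumption
  have hcard : ({e1, e2, e3, e4, e5} : Finset α).card = 5 := by
    rw [Finset.card_insert_of_notMem (by simp [d12, d13, d14, d15]),
        Finset.card_insert_of_notMem (by simp [d23, d24, d25]),
        Finset.card_insert_of_notMem (by simp [d34, d35]),
        Finset.card_insert_of_notMem (by simp [d45]), Finset.card_singleton]
  exact hcard ▸ Finset.card_le_card hsub

private lemma mem_sqEdges_iff {V : Type*} [DecidableEq V] {e : Sym2 V} {a b c d : V} :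
    e ∈ sqEdges a b c d ↔ e = s(a, b) ∨ e = s(b, c) ∨ e = s(c, d) ∨ e = s(d, a) := by
  simp [sqEdges]

private lemma sqEdges_card_le {V : Type*} [DecidableEq V] (a b c d : V) :
    (sqEdges a b c d).card ≤ 4 := by
  have h1 := Finset.card_insert_le (s(a, b)) ({s(b, c), s(c, d), s(d, a)} : Finset (Sym2 V))
  have h2 := Finset.card_insert_le (s(b, c)) ({s(c, d), s(d, a)} : Finset (Sym2 V))
  have h3 := Finset.card_insert_le (s(c, d)) ({s(d, a)} : Finset (Sym2 V))
  have h4 : ({s(d, a)} : Finset (Sym2 V)).card = 1 := Finset.card_singleton _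
  unfold sqEdges
  omega

private lemma degIn_le_of_image {V : Type*} {M : Finset (Sym2 V)} {v : V}
    {T : Finset V} (h : ∀ e ∈ M, v ∈ e → ∃ x ∈ T, e = s(v, x)) :
    degIn M v ≤ T.card := by
  unfold degIn
  have hsub : M.filter (fun e => v ∈ e) ⊆ T.image (fun x => s(v, x)) := by
    intro e' he'
    rw [Finset.mem_filter] at he'
    obtain ⟨x, hx, rfl⟩ := h e' he'.1 he'.2
    exact Finset.mem_image_of_mem _ hx
  exact le_trans (Finset.card_le_card hsub) Finset.card_image_le

private lemma degIn_three {V : Type*} {M : Finset (Sym2 V)} {v : V} {e1 e2 e3 : Sym2 V}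
    (h1 : e1 ∈ M) (h2 : e2 ∈ M) (h3 : e3 ∈ M)
    (m1 : v ∈ e1) (m2 : v ∈ e2) (m3 : v ∈ e3)
    (d12 : e1 ≠ e2) (d13 : e1 ≠ e3) (d23 : e2 ≠ e3) : 3 ≤ degIn M v := by
  unfold degIn
  exact three_le_card (Finset.mem_filter.mpr ⟨h1, m1⟩) (Finset.mem_filter.mpr ⟨h2, m2⟩)
    (Finset.mem_filter.mpr ⟨h3, m3⟩) d12 d13 d23

private lemma degIn_mono_of {V : Type*} {M N : Finset (Sym2 V)} {v : V}
    (h : ∀ e ∈ M, v ∈ e → e ∈ N) : degIn M v ≤ degIn N v := by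
  unfold degIn
  apply Finset.card_le_card
  intro e he
  rw [Finset.mem_filter] at he ⊢
  exact ⟨h e he.1 he.2, he.2⟩

private lemma square_other {V : Type*} [DecidableEq V] {G : SimpleGraph V} {x y z u : V}
    (hsq : IsSquare4 G x y z u) {p q : V} (h : s(p, q) ∈ sqEdges x y z u) :
    ∃ t, t ≠ q ∧ s(p, t) ∈ sqEdges x y z u := by
  obtain ⟨hxy, hxz, hxu, hyz, hyu, hzu, -⟩ := hsq
  rw [mem_sqEdges_iff] at h
  rcases h with h | h | h | h <;> rw [Sym2.eq_iff] at h <;>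
      rcases h with ⟨rfl, rfl⟩ | ⟨rfl, rfl⟩
  · exact ⟨u, Ne.symm hyu, mem_sqEdges_iff.mpr (Or.inr (Or.inr (Or.inr Sym2.eq_swap)))⟩
  · exact ⟨z, Ne.symm hxz, mem_sqEdges_iff.mpr (Or.inr (Or.inl rfl))⟩
  · exact ⟨x, hxz, mem_sqEdges_iff.mpr (Or.inl Sym2.eq_swap)⟩
  · exact ⟨u, Ne.symm hyu, mem_sqEdges_iff.mpr (Or.inr (Or.inr (Or.inl rfl)))⟩
  · exact ⟨y, hyu, mem_sqEdges_iff.mpr (Or.inr (Or.inl Sym2.eq_swap))⟩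
  · exact ⟨x, hxz, mem_sqEdges_iff.mpr (Or.inr (Or.inr (Or.inr rfl)))⟩
  · exact ⟨z, Ne.symm hxz, mem_sqEdges_iff.mpr (Or.inr (Or.inr (Or.inl Sym2.eq_swap)))⟩
  · exact ⟨y, hyu, mem_sqEdges_iff.mpr (Or.inl rfl)⟩

/-- Let `s = (a,b,c,d)` and `s' = (c,d,e,f)` be squares of a
subcubic graph `G` sharing exactly the edge `(c,d)`, and let `w` be
vertex-induced on `s'`. If `M₁` is a 2-matching of `G` containing all four
native edges of `s`, then there is a 2-matching `M₂` with `w(M₂) ≥ w(M₁)`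
that does not contain all native edges of `s`, and every square of `G` whose
native edges all lie in `M₂` also has all of its native edges in `M₁`. -/
theorem remove_square_sharing_one_edge {V : Type*} [Fintype V] [DecidableEq V]
    (G : SimpleGraph V) [DecidableRel G.Adj]
    (hsub : ∀ v : V, G.degree v ≤ 3)
    (w : Sym2 V → ℝ) (hw : ∀ e, 0 ≤ w e)
    (a b c d e f : V)
    (hs : IsSquare4 G a b c d) (hs' : IsSquare4 G c d e f)
    (hshare : sqEdges a b c d ∩ sqEdges c d e f = {s(c, d)})
    (hvi : ∃ r : V → ℝ, ∀ x y : V, (x = c ∨ x = d ∨ x = e ∨ x = f) →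
      (y = c ∨ y = d ∨ y = e ∨ y = f) → G.Adj x y → w s(x, y) = r x + r y)
    (M₁ : Finset (Sym2 V)) (hM₁ : Is2Matching G M₁)
    (hsM₁ : sqEdges a b c d ⊆ M₁) :
    ∃ M₂ : Finset (Sym2 V), Is2Matching G M₂ ∧
      ∑ e' ∈ M₁, w e' ≤ ∑ e' ∈ M₂, w e' ∧
      ¬ sqEdges a b c d ⊆ M₂ ∧
      ∀ x y z u : V, IsSquare4 G x y z u → sqEdges x y z u ⊆ M₂ →
        sqEdges x y z u ⊆ M₁ := by
  classical
  obtain ⟨hab, hac, had, hbc, hbd, hcd, hAab, hAbc, hAcd, hAda⟩ := hs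
  obtain ⟨hcd', hce, hcf, hde, hdf, hef, hAcd', hAde, hAef, hAfc⟩ := hs'
  obtain ⟨hM₁G, hM₁deg⟩ := hM₁
  have habM : s(a, b) ∈ M₁ := hsM₁ (mem_sqEdges_iff.mpr (Or.inl rfl))
  have hbcM : s(b, c) ∈ M₁ := hsM₁ (mem_sqEdges_iff.mpr (Or.inr (Or.inl rfl)))
  have hcdM : s(c, d) ∈ M₁ := hsM₁ (mem_sqEdges_iff.mpr (Or.inr (Or.inr (Or.inl rfl))))
  have hdaM : s(d, a) ∈ M₁ := hsM₁ (mem_sqEdges_iff.mpr (Or.inr (Or.inr (Or.inr rfl))))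
  -- extra distinctness
  have hae : a ≠ e := by
    intro h
    have hmem : s(d, a) ∈ sqEdges a b c d ∩ sqEdges c d e f := by
      rw [Finset.mem_inter]
      constructor
      · exact mem_sqEdges_iff.mpr (Or.inr (Or.inr (Or.inr rfl)))
      · subst h
        exact mem_sqEdges_iff.mpr (Or.inr (Or.inl rfl))
    rw [hshare, Finset.mem_singleton, Sym2.eq_iff] at hmem
    rcases hmem with ⟨h1, _⟩ | ⟨_, h2⟩
    · exact hcd h1.symm
    · exact hac h2
  have hbf : b ≠ f := by
    intro h
    have hmem : s(b, c) ∈ sqEdges a b c d ∩ sqEdges c d e f := by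
      rw [Finset.mem_inter]
      constructor
      · exact mem_sqEdges_iff.mpr (Or.inr (Or.inl rfl))
      · subst h
        exact mem_sqEdges_iff.mpr (Or.inr (Or.inr (Or.inr rfl)))
    rw [hshare, Finset.mem_singleton, Sym2.eq_iff] at hmem
    rcases hmem with ⟨h1, _⟩ | ⟨h1, _⟩
    · exact hbc h1
    · exact hbd h1
  have haf : a ≠ f := by
    intro h
    subst h
    by_cases hbe : b = e
    · subst hbe
      have hmem : s(a, b) ∈ sqEdges a b c d ∩ sqEdges c d b a := by
        rw [Finset.mem_inter]
        constructor
        · exact mem_sqEdges_iff.mpr (Or.inl rfl)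
        · exact mem_sqEdges_iff.mpr (Or.inr (Or.inr (Or.inl Sym2.eq_swap)))
      rw [hshare, Finset.mem_singleton, Sym2.eq_iff] at hmem
      rcases hmem with ⟨h1, _⟩ | ⟨h1, _⟩
      · exact hac h1
      · exact had h1
    · have hsubN : ({b, c, d, e} : Finset V) ⊆ G.neighborFinset a := by
        intro t ht
        simp only [Finset.mem_insert, Finset.mem_singleton] at ht
        rw [SimpleGraph.mem_neighborFinset]
        rcases ht with rfl | rfl | rfl | rfl
        · exact hAab
        · exact hAfc
        · exact hAda.symm
        · exact hAef.symm
      have hc4 : ({b, c, d, e} : Finset V).card = 4 := by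
        rw [Finset.card_insert_of_notMem (by simp [hbc, hbd, hbe]),
            Finset.card_insert_of_notMem (by simp [hcd, hce]),
            Finset.card_insert_of_notMem (by simp [hde]), Finset.card_singleton]
      have hle := Finset.card_le_card hsubN
      rw [hc4, SimpleGraph.card_neighborFinset_eq_degree] at hle
      have := hsub a
      omega
  have hbe : b ≠ e := by
    intro h
    subst h
    have hsubN : ({a, c, d, f} : Finset V) ⊆ G.neighborFinset b := by
      intro t ht
      simp only [Finset.mem_insert, Finset.mem_singleton] at ht
      rw [SimpleGraph.mem_neighborFinset]
      rcases ht with rfl | rfl | rfl | rfl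
      · exact hAab.symm
      · exact hAbc
      · exact hAde.symm
      · exact hAef
    have hc4 : ({a, c, d, f} : Finset V).card = 4 := by
      rw [Finset.card_insert_of_notMem (by simp [hac, had, haf]),
          Finset.card_insert_of_notMem (by simp [hcd, hcf]),
          Finset.card_insert_of_notMem (by simp [hdf]), Finset.card_singleton]
    have hle := Finset.card_le_card hsubN
    rw [hc4, SimpleGraph.card_neighborFinset_eq_degree] at hle
    have := hsub b
    omega
  -- neighbourhood closure of c and d
  have hNc : ∀ t, G.Adj c t → t = b ∨ t = d ∨ t = f := by
    intro t ht
    have hsubN : ({b, d, f} : Finset V) ⊆ G.neighborFinset c := by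
      intro x hx
      simp only [Finset.mem_insert, Finset.mem_singleton] at hx
      rw [SimpleGraph.mem_neighborFinset]
      rcases hx with rfl | rfl | rfl
      · exact hAbc.symm
      · exact hAcd
      · exact hAfc.symm
    have hcard : ({b, d, f} : Finset V).card = 3 := by
      rw [Finset.card_insert_of_notMem (by simp [hbd, hbf]),
          Finset.card_insert_of_notMem (by simp [hdf]), Finset.card_singleton]
    have hdeg3 : (G.neighborFinset c).card ≤ 3 := by
      rw [SimpleGraph.card_neighborFinset_eq_degree]; exact hsub c
    have heq := Finset.eq_of_subset_of_card_le hsubN (by rw [hcard]; exact hdeg3)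
    have hmem : t ∈ ({b, d, f} : Finset V) := by
      rw [heq]
      exact (SimpleGraph.mem_neighborFinset _ _ _).mpr ht
    simpa using hmem
  have hNd : ∀ t, G.Adj d t → t = a ∨ t = c ∨ t = e := by
    intro t ht
    have hsubN : ({a, c, e} : Finset V) ⊆ G.neighborFinset d := by
      intro x hx
      simp only [Finset.mem_insert, Finset.mem_singleton] at hx
      rw [SimpleGraph.mem_neighborFinset]
      rcases hx with rfl | rfl | rfl
      · exact hAda
      · exact hAcd.symm
      · exact hAde
    have hcard : ({a, c, e} : Finset V).card = 3 := by
      rw [Finset.card_insert_of_notMem (by simp [hac, hae]),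
          Finset.card_insert_of_notMem (by simp [hce]), Finset.card_singleton]
    have hdeg3 : (G.neighborFinset d).card ≤ 3 := by
      rw [SimpleGraph.card_neighborFinset_eq_degree]; exact hsub d
    have heq := Finset.eq_of_subset_of_card_le hsubN (by rw [hcard]; exact hdeg3)
    have hmem : t ∈ ({a, c, e} : Finset V) := by
      rw [heq]
      exact (SimpleGraph.mem_neighborFinset _ _ _).mpr ht
    simpa using hmem
  -- s(c,f) and s(d,e) are not in M₁
  have hcfM : s(c, f) ∉ M₁ := by
    intro hmem
    have h3 : 3 ≤ degIn M₁ c :=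
      degIn_three hbcM hcdM hmem (by simp) (by simp) (by simp)
        (sym2_ne_of (fun h => hbc h.1) (fun h => hbd h.1))
        (sym2_ne_of (fun h => hbc h.1) (fun h => hbf h.1))
        (sym2_ne_of (fun h => hdf h.2) (fun h => hcf h.1))
    have := hM₁deg c
    omega
  have hdeM : s(d, e) ∉ M₁ := by
    intro hmem
    have h3 : 3 ≤ degIn M₁ d :=
      degIn_three hcdM hdaM hmem (by simp) (by simp) (by simp)
        (sym2_ne_of (fun h => hcd h.1) (fun h => hac h.1.symm))
        (sym2_ne_of (fun h => hcd h.1) (fun h => hce h.1))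
        (sym2_ne_of (fun h => hae h.2) (fun h => hde h.1))
    have := hM₁deg d
    omega
  -- "forced second edge" lemmas at a and b
  have hM₁a : ∀ t, s(a, t) ∈ M₁ → t = b ∨ t = d := by
    intro t hmem
    by_contra hcon
    push_neg at hcon
    obtain ⟨htb, htd⟩ := hcon
    have hta : t ≠ a := ((G.mem_edgeSet).mp (hM₁G _ hmem)).ne'
    have h3 : 3 ≤ degIn M₁ a :=
      degIn_three habM hdaM hmem (by simp) (by simp) (by simp)
        (sym2_ne_of (fun h => had h.1) (fun h => hbd h.2))
        (sym2_ne_of (fun h => htb h.2.symm) (fun h => hta h.1.symm))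
        (sym2_ne_of (fun h => had h.1.symm) (fun h => htd h.1.symm))
    have := hM₁deg a
    omega
  have hM₁b : ∀ t, s(b, t) ∈ M₁ → t = a ∨ t = c := by
    intro t hmem
    by_contra hcon
    push_neg at hcon
    obtain ⟨hta, htc⟩ := hcon
    have htb : t ≠ b := ((G.mem_edgeSet).mp (hM₁G _ hmem)).ne'
    have h3 : 3 ≤ degIn M₁ b :=
      degIn_three habM hbcM hmem (by simp) (by simp) (by simp)
        (sym2_ne_of (fun h => hab h.1) (fun h => hac h.1))
        (sym2_ne_of (fun h => hab h.1) (fun h => hta h.1.symm))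
        (sym2_ne_of (fun h => htc h.2.symm) (fun h => htb h.1.symm))
    have := hM₁deg b
    omega
  -- the new 2-matching
  set M₂ : Finset (Sym2 V) :=
    insert s(d, e) (insert s(c, f) ((M₁.erase s(c, d)).erase s(e, f))) with hM₂def
  have hcdM₂ : s(c, d) ∉ M₂ := by
    rw [hM₂def]
    simp only [Finset.mem_insert, Finset.mem_erase]
    rintro (h | h | ⟨-, h, -⟩)
    · exact sym2_ne_of (fun h' => hcd h'.1) (fun h' => hce h'.1) h
    · exact sym2_ne_of (fun h' => hdf h'.2) (fun h' => hcf h'.1) h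
    · exact h rfl
  have hefM₂ : s(e, f) ∉ M₂ := by
    rw [hM₂def]
    simp only [Finset.mem_insert, Finset.mem_erase]
    rintro (h | h | ⟨h, -⟩)
    · exact sym2_ne_of (fun h' => hde h'.1.symm) (fun h' => hdf h'.2.symm) h
    · exact sym2_ne_of (fun h' => hce h'.1.symm) (fun h' => hef h'.1) h
    · exact h rfl
  have hM₂cases : ∀ e', e' ∈ M₂ →
      e' = s(d, e) ∨ e' = s(c, f) ∨ (e' ∈ M₁ ∧ e' ≠ s(c, d) ∧ e' ≠ s(e, f)) := by
    intro e' h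
    rw [hM₂def] at h
    rcases Finset.mem_insert.mp h with h | h
    · exact Or.inl h
    rcases Finset.mem_insert.mp h with h | h
    · exact Or.inr (Or.inl h)
    · rcases Finset.mem_erase.mp h with ⟨h3, h'⟩
      rcases Finset.mem_erase.mp h' with ⟨h2, h1⟩
      exact Or.inr (Or.inr ⟨h1, h2, h3⟩)
  have hM₂G : ∀ e', e' ∈ M₂ → e' ∈ G.edgeSet := by
    intro e' h
    rcases hM₂cases e' h with rfl | rfl | ⟨h1, -, -⟩
    · exact (G.mem_edgeSet).mpr hAde
    · exact (G.mem_edgeSet).mpr hAfc.symm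
    · exact hM₁G _ h1
  -- degrees in M₂
  have hdegM₂ : ∀ v, degIn M₂ v ≤ 2 := by
    intro v
    by_cases hvc : v = c
    · rw [hvc]
      have hb : degIn M₂ c ≤ ({b, f} : Finset V).card := by
        apply degIn_le_of_image
        intro e' he' hce'
        rcases hM₂cases e' he' with rfl | rfl | ⟨h1, h2, -⟩
        · rcases Sym2.mem_iff.mp hce' with h | h
          · exact absurd h hcd
          · exact absurd h hce
        · exact ⟨f, by simp, rfl⟩
        · obtain ⟨x, rfl⟩ := sym2_mem_exists c e' hce'
          have hadj : G.Adj c x := (G.mem_edgeSet).mp (hM₁G _ h1)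
          rcases hNc x hadj with h | h | h
          · exact ⟨x, by simp [h], rfl⟩
          · exact absurd (by rw [h]) h2
          · rw [h] at h1
            exact absurd h1 hcfM
      have hc2 : ({b, f} : Finset V).card ≤ 2 := by
        refine le_trans (Finset.card_insert_le _ _) ?_
        simp
      omega
    by_cases hvd : v = d
    · rw [hvd]
      have hb : degIn M₂ d ≤ ({a, e} : Finset V).card := by
        apply degIn_le_of_image
        intro e' he' hde'
        rcases hM₂cases e' he' with rfl | rfl | ⟨h1, h2, -⟩
        · exact ⟨e, by simp, rfl⟩
        · rcases Sym2.mem_iff.mp hde' with h | h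
          · exact absurd h.symm hcd
          · exact absurd h hdf
        · obtain ⟨x, rfl⟩ := sym2_mem_exists d e' hde'
          have hadj : G.Adj d x := (G.mem_edgeSet).mp (hM₁G _ h1)
          rcases hNd x hadj with h | h | h
          · exact ⟨x, by simp [h], rfl⟩
          · exact absurd (by rw [h]; exact Sym2.eq_swap) h2
          · rw [h] at h1
            exact absurd h1 hdeM
      have hc2 : ({a, e} : Finset V).card ≤ 2 := by
        refine le_trans (Finset.card_insert_le _ _) ?_
        simp
      omega
    by_cases hve : v = e
    · rw [hve]
      have hb : degIn M₂ e ≤ ((G.neighborFinset e).erase f).card := by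
        apply degIn_le_of_image
        intro e' he' hee'
        rcases hM₂cases e' he' with rfl | rfl | ⟨h1, -, h3⟩
        · exact ⟨d, Finset.mem_erase.mpr ⟨hdf, (SimpleGraph.mem_neighborFinset _ _ _).mpr hAde.symm⟩,
            Sym2.eq_swap⟩
        · rcases Sym2.mem_iff.mp hee' with h | h
          · exact absurd h.symm hce
          · exact absurd h hef
        · obtain ⟨x, rfl⟩ := sym2_mem_exists e e' hee'
          have hadj : G.Adj e x := (G.mem_edgeSet).mp (hM₁G _ h1)
          have hxf : x ≠ f := by
            intro hh
            rw [hh] at h3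
            exact h3 rfl
          exact ⟨x, Finset.mem_erase.mpr ⟨hxf, (SimpleGraph.mem_neighborFinset _ _ _).mpr hadj⟩, rfl⟩
      have hfN : f ∈ G.neighborFinset e := (SimpleGraph.mem_neighborFinset _ _ _).mpr hAef
      have hc1 := Finset.card_erase_of_mem hfN
      have hc2 : (G.neighborFinset e).card ≤ 3 := by
        rw [SimpleGraph.card_neighborFinset_eq_degree]; exact hsub e
      omega
    by_cases hvf : v = f
    · rw [hvf]
      have hb : degIn M₂ f ≤ ((G.neighborFinset f).erase e).card := by
        apply degIn_le_of_image
        intro e' he' hfe'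
        rcases hM₂cases e' he' with rfl | rfl | ⟨h1, -, h3⟩
        · rcases Sym2.mem_iff.mp hfe' with h | h
          · exact absurd h.symm hdf
          · exact absurd h.symm hef
        · exact ⟨c, Finset.mem_erase.mpr ⟨hce,
            (SimpleGraph.mem_neighborFinset _ _ _).mpr hAfc⟩, Sym2.eq_swap⟩
        · obtain ⟨x, rfl⟩ := sym2_mem_exists f e' hfe'
          have hadj : G.Adj f x := (G.mem_edgeSet).mp (hM₁G _ h1)
          have hxe : x ≠ e := by
            intro hh
            rw [hh] at h3
            exact h3 Sym2.eq_swap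
          exact ⟨x, Finset.mem_erase.mpr ⟨hxe, (SimpleGraph.mem_neighborFinset _ _ _).mpr hadj⟩, rfl⟩
      have heN : e ∈ G.neighborFinset f := (SimpleGraph.mem_neighborFinset _ _ _).mpr hAef.symm
      have hc1 := Finset.card_erase_of_mem heN
      have hc2 : (G.neighborFinset f).card ≤ 3 := by
        rw [SimpleGraph.card_neighborFinset_eq_degree]; exact hsub f
      omega
    · have hle : degIn M₂ v ≤ degIn M₁ v := by
        apply degIn_mono_of
        intro e' h hv
        rcases hM₂cases e' h with rfl | rfl | ⟨h1, -, -⟩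
        · rcases Sym2.mem_iff.mp hv with h' | h'
          · exact absurd h' hvd
          · exact absurd h' hve
        · rcases Sym2.mem_iff.mp hv with h' | h'
          · exact absurd h' hvc
          · exact absurd h' hvf
        · exact h1
      exact le_trans hle (hM₁deg v)
  -- the weight computation
  obtain ⟨r, hr⟩ := hvi
  have hwcd : w s(c, d) = r c + r d := hr c d (Or.inl rfl) (Or.inr (Or.inl rfl)) hAcd'
  have hwde : w s(d, e) = r d + r e :=
    hr d e (Or.inr (Or.inl rfl)) (Or.inr (Or.inr (Or.inl rfl))) hAde
  have hwef : w s(e, f) = r e + r f :=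
    hr e f (Or.inr (Or.inr (Or.inl rfl))) (Or.inr (Or.inr (Or.inr rfl))) hAef
  have hwcf : w s(c, f) = r c + r f := by
    have hh := hr f c (Or.inr (Or.inr (Or.inr rfl))) (Or.inl rfl) hAfc
    rw [show s(c, f) = s(f, c) from Sym2.eq_swap, hh]
    ring
  have hkey : w s(d, e) + w s(c, f) = w s(c, d) + w s(e, f) := by
    rw [hwcd, hwde, hwef, hwcf]; ring
  have hsum : ∑ e' ∈ M₁, w e' ≤ ∑ e' ∈ M₂, w e' := by
    have hde_nin : s(d, e) ∉ insert s(c, f) ((M₁.erase s(c, d)).erase s(e, f)) := by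
      simp only [Finset.mem_insert, Finset.mem_erase]
      rintro (h | ⟨-, -, h⟩)
      · exact sym2_ne_of (fun h' => hcd h'.1.symm) (fun h' => hdf h'.1) h
      · exact hdeM h
    have hcf_nin : s(c, f) ∉ (M₁.erase s(c, d)).erase s(e, f) := by
      simp only [Finset.mem_erase]
      rintro ⟨-, -, h⟩
      exact hcfM h
    rw [hM₂def, Finset.sum_insert hde_nin, Finset.sum_insert hcf_nin]
    by_cases hefM : s(e, f) ∈ M₁
    · have h1 : s(e, f) ∈ M₁.erase s(c, d) :=
        Finset.mem_erase.mpr ⟨sym2_ne_of (fun h => hce h.1.symm) (fun h => hde h.1.symm), hefM⟩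
      rw [Finset.sum_erase_eq_sub h1, Finset.sum_erase_eq_sub hcdM]
      linarith [hkey]
    · rw [Finset.erase_eq_of_notMem (fun h => hefM (Finset.mem_of_mem_erase h)),
        Finset.sum_erase_eq_sub hcdM]
      have := hw s(e, f)
      linarith [hkey]
  -- M₂ misses an edge of the square s
  have hnot : ¬ sqEdges a b c d ⊆ M₂ := fun h =>
    hcdM₂ (h (mem_sqEdges_iff.mpr (Or.inr (Or.inr (Or.inl rfl)))))
  -- the five-edge contradiction
  have hfinal : ∀ x y z u : V, IsSquare4 G x y z u →
      s(d, e) ∈ sqEdges x y z u → s(d, a) ∈ sqEdges x y z u → s(a, b) ∈ sqEdges x y z u →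
      s(b, c) ∈ sqEdges x y z u → s(c, f) ∈ sqEdges x y z u → False := by
    intro x y z u _ h1 h2 h3 h4 h5
    have h5le : 5 ≤ (sqEdges x y z u).card :=
      five_le_card h1 h2 h3 h4 h5
        (sym2_ne_of (fun h => hae h.2.symm) (fun h => had h.1.symm))
        (sym2_ne_of (fun h => had h.1.symm) (fun h => hbd h.1.symm))
        (sym2_ne_of (fun h => hbd h.1.symm) (fun h => hcd h.1.symm))
        (sym2_ne_of (fun h => hcd h.1.symm) (fun h => hdf h.1))
        (sym2_ne_of (fun h => had h.1.symm) (fun h => hbd h.1.symm))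
        (sym2_ne_of (fun h => hbd h.1.symm) (fun h => hcd h.1.symm))
        (sym2_ne_of (fun h => hcd h.1.symm) (fun h => hdf h.1))
        (sym2_ne_of (fun h => hab h.1) (fun h => hac h.1))
        (sym2_ne_of (fun h => hac h.1) (fun h => haf h.1))
        (sym2_ne_of (fun h => hbc h.1) (fun h => hbf h.1))
    have hle4 := sqEdges_card_le x y z u
    omega
  -- preservation of squares
  have hpres : ∀ x y z u : V, IsSquare4 G x y z u → sqEdges x y z u ⊆ M₂ →
      sqEdges x y z u ⊆ M₁ := by
    intro x y z u hsq hsubM₂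
    have hchain_de : s(d, e) ∈ sqEdges x y z u → False := by
      intro hde_sq
      obtain ⟨t, hte, ht⟩ := square_other hsq hde_sq
      have hadj : G.Adj d t := (G.mem_edgeSet).mp (hM₂G _ (hsubM₂ ht))
      have hda_sq : s(d, a) ∈ sqEdges x y z u := by
        rcases hNd t hadj with h | h | h
        · rw [h] at ht
          exact ht
        · rw [h] at ht
          exact absurd (hsubM₂ ht)
            (by rw [show s(d, c) = s(c, d) from Sym2.eq_swap]; exact hcdM₂)
        · exact absurd h hte
      have hda_sq' : s(a, d) ∈ sqEdges x y z u := by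
        rw [show s(a, d) = s(d, a) from Sym2.eq_swap]; exact hda_sq
      obtain ⟨t₂, ht₂d, ht₂⟩ := square_other hsq hda_sq'
      have ht₂M₁ : s(a, t₂) ∈ M₁ := by
        rcases hM₂cases _ (hsubM₂ ht₂) with h | h | ⟨h1, -, -⟩
        · exact absurd h (sym2_ne_of (fun h' => had h'.1) (fun h' => hae h'.1))
        · exact absurd h (sym2_ne_of (fun h' => hac h'.1) (fun h' => haf h'.1))
        · exact h1
      rcases hM₁a t₂ ht₂M₁ with h | h
      swap
      · exact ht₂d h
      rw [h] at ht₂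
      have hab_sq' : s(b, a) ∈ sqEdges x y z u := by
        rw [show s(b, a) = s(a, b) from Sym2.eq_swap]; exact ht₂
      obtain ⟨t₃, ht₃a, ht₃⟩ := square_other hsq hab_sq'
      have ht₃M₁ : s(b, t₃) ∈ M₁ := by
        rcases hM₂cases _ (hsubM₂ ht₃) with h | h | ⟨h1, -, -⟩
        · exact absurd h (sym2_ne_of (fun h' => hbd h'.1) (fun h' => hbe h'.1))
        · exact absurd h (sym2_ne_of (fun h' => hbc h'.1) (fun h' => hbf h'.1))
        · exact h1
      rcases hM₁b t₃ ht₃M₁ with h3 | h3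
      · exact ht₃a h3
      rw [h3] at ht₃
      have hbc_sq' : s(c, b) ∈ sqEdges x y z u := by
        rw [show s(c, b) = s(b, c) from Sym2.eq_swap]; exact ht₃
      obtain ⟨t₄, ht₄b, ht₄⟩ := square_other hsq hbc_sq'
      have hadj₄ : G.Adj c t₄ := (G.mem_edgeSet).mp (hM₂G _ (hsubM₂ ht₄))
      have hcf_sq : s(c, f) ∈ sqEdges x y z u := by
        rcases hNc t₄ hadj₄ with h4 | h4 | h4
        · exact absurd h4 ht₄b
        · rw [h4] at ht₄
          exact absurd (hsubM₂ ht₄)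
            (by rw [show s(c, d) = s(c, d) from rfl]; exact hcdM₂)
        · rw [h4] at ht₄
          exact ht₄
      exact hfinal x y z u hsq hde_sq hda_sq ht₂ ht₃ hcf_sq
    have hchain_cf : s(c, f) ∈ sqEdges x y z u → False := by
      intro hcf_sq
      obtain ⟨t, htf, ht⟩ := square_other hsq hcf_sq
      have hadj : G.Adj c t := (G.mem_edgeSet).mp (hM₂G _ (hsubM₂ ht))
      have hcb_sq : s(c, b) ∈ sqEdges x y z u := by
        rcases hNc t hadj with h | h | h
        · rw [h] at ht
          exact ht
        · rw [h] at ht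
          exact absurd (hsubM₂ ht) hcdM₂
        · exact absurd h htf
      have hbc_sq : s(b, c) ∈ sqEdges x y z u := by
        rw [show s(b, c) = s(c, b) from Sym2.eq_swap]; exact hcb_sq
      obtain ⟨t₂, ht₂c, ht₂⟩ := square_other hsq hbc_sq
      have ht₂M₁ : s(b, t₂) ∈ M₁ := by
        rcases hM₂cases _ (hsubM₂ ht₂) with h | h | ⟨h1, -, -⟩
        · exact absurd h (sym2_ne_of (fun h' => hbd h'.1) (fun h' => hbe h'.1))
        · exact absurd h (sym2_ne_of (fun h' => hbc h'.1) (fun h' => hbf h'.1))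
        · exact h1
      rcases hM₁b t₂ ht₂M₁ with h | h
      swap
      · exact ht₂c h
      rw [h] at ht₂
      have hab_sq : s(a, b) ∈ sqEdges x y z u := by
        rw [show s(a, b) = s(b, a) from Sym2.eq_swap]; exact ht₂
      obtain ⟨t₃, ht₃b, ht₃⟩ := square_other hsq hab_sq
      have ht₃M₁ : s(a, t₃) ∈ M₁ := by
        rcases hM₂cases _ (hsubM₂ ht₃) with h | h | ⟨h1, -, -⟩
        · exact absurd h (sym2_ne_of (fun h' => had h'.1) (fun h' => hae h'.1))
        · exact absurd h (sym2_ne_of (fun h' => hac h'.1) (fun h' => haf h'.1))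
        · exact h1
      rcases hM₁a t₃ ht₃M₁ with h3 | h3
      · exact ht₃b h3
      rw [h3] at ht₃
      have hda_sq : s(d, a) ∈ sqEdges x y z u := by
        rw [show s(d, a) = s(a, d) from Sym2.eq_swap]; exact ht₃
      obtain ⟨t₄, ht₄a, ht₄⟩ := square_other hsq hda_sq
      have hadj₄ : G.Adj d t₄ := (G.mem_edgeSet).mp (hM₂G _ (hsubM₂ ht₄))
      have hde_sq : s(d, e) ∈ sqEdges x y z u := by
        rcases hNd t₄ hadj₄ with h4 | h4 | h4
        · exact absurd h4 ht₄a
        · rw [h4] at ht₄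
          exact absurd (hsubM₂ ht₄)
            (by rw [show s(d, c) = s(c, d) from Sym2.eq_swap]; exact hcdM₂)
        · rw [h4] at ht₄
          exact ht₄
      exact hfinal x y z u hsq hde_sq hda_sq hab_sq hbc_sq hcf_sq
    intro e' he'
    rcases hM₂cases _ (hsubM₂ he') with h | h | ⟨h1, -, -⟩
    · exact (hchain_de (h ▸ he')).elim
    · exact (hchain_cf (h ▸ he')).elim
    · exact h1
  exact ⟨M₂, ⟨hM₂G, hdegM₂⟩, hsum, hnot, hpres⟩

end Paper
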